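/- The profinite group C_p × Z_p, where C_p is cyclic of prime order p and Z_p is the additive group of p-adic integers, can be covered by countably many procyclic (closed) subgroups but cannot be covered by countably many open procyclic subgroups. -/

import Mathlib

open Filter Topology AddSubgroup

instance (n : ℕ) : TopologicalSpace (ZMod n) := ⊥

instance (n : ℕ) : DiscreteTopology (ZMod n) := ⟨rfl⟩

/-- The countable family of procyclic subgroups used for the covering. -/
noncomputable def cpPadicFam (p : ℕ) [Fact p.Prime] : ℕ → AddSubgroup (ZMod p × ℤ_[p])
  | 0 => (AddSubgroup.zmultiples ((0 : ZMod p), (1 : ℤ_[p]))).topologicalClosure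
  | (n+1) => (AddSubgroup.zmultiples ((1 : ZMod p),
      ((p : ℤ_[p]) ^ (n.unpair.1) * (n.unpair.2 : ℤ_[p])))).topologicalClosure

lemma cpPadic_tendsto_appr (p : ℕ) [Fact p.Prime] (y : ℤ_[p]) :
    Tendsto (fun i => ((y.appr i : ℤ_[p]))) atTop (𝓝 y) := by
  rw [tendsto_iff_dist_tendsto_zero]
  have hb : ∀ i : ℕ, dist ((y.appr i : ℤ_[p])) y ≤ ((p:ℝ)⁻¹)^i := by
    intro i
    rw [dist_comm, dist_eq_norm]
    have := (PadicInt.norm_le_pow_iff_mem_span_pow (y - (y.appr i : ℤ_[p])) i).mpr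
      (PadicInt.appr_spec i y)
    calc ‖y - (y.appr i : ℤ_[p])‖ ≤ (p:ℝ)^(-(i:ℤ)) := this
      _ = ((p:ℝ)⁻¹)^i := by rw [zpow_neg, zpow_natCast, inv_pow]
  refine squeeze_zero (fun i => dist_nonneg) hb ?_
  apply tendsto_pow_atTop_nhds_zero_of_lt_one
  · positivity
  · rw [inv_lt_one_iff₀]
    right
    exact_mod_cast (Fact.out : p.Prime).one_lt

lemma cpPadic_mem_cl (p : ℕ) [Fact p.Prime] (g : ZMod p × ℤ_[p]) {a : ZMod p} {y : ℤ_[p]}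
    (c : ℕ → ℤ) (h1 : ∀ i, c i • g.1 = a)
    (h2 : Tendsto (fun i => (c i : ℤ_[p]) * g.2) atTop (𝓝 y)) :
    (a, y) ∈ (AddSubgroup.zmultiples g).topologicalClosure := by
  have key : ∀ i, c i • g = (a, (c i : ℤ_[p]) * g.2) := fun i => by
    rw [Prod.smul_def, h1 i, zsmul_eq_mul]
  refine mem_closure_of_tendsto (f := fun i => c i • g) (b := atTop) ?_ ?_
  · simp only [key]
    exact tendsto_const_nhds.prodMk_nhds h2
  · exact Filter.Eventually.of_forall fun i =>
      AddSubgroup.zsmul_mem _ (AddSubgroup.mem_zmultiples g) (c i)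

/-- `C_p × ℤ_p` can be covered by countably many procyclic subgroups, but not
by countably many open procyclic subgroups. -/
theorem cp_times_padic_procyclic_covers (p : ℕ) [Fact p.Prime] :
    (∃ H : ℕ → AddSubgroup (ZMod p × ℤ_[p]),
      (∀ n, ∃ x : ZMod p × ℤ_[p],
        H n = (AddSubgroup.zmultiples x).topologicalClosure) ∧
      ∀ g : ZMod p × ℤ_[p], ∃ n, g ∈ H n) ∧
    ¬ (∃ H : ℕ → AddSubgroup (ZMod p × ℤ_[p]),
      (∀ n, IsOpen (H n : Set (ZMod p × ℤ_[p])) ∧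
        ∃ x : ZMod p × ℤ_[p],
          H n = (AddSubgroup.zmultiples x).topologicalClosure) ∧
      ∀ g : ZMod p × ℤ_[p], ∃ n, g ∈ H n) := by
  have hp : p.Prime := Fact.out
  constructor
  · -- Part 1: covering by procyclic subgroups
    refine ⟨cpPadicFam p, fun n => ?_, fun g => ?_⟩
    · cases n with
      | zero => exact ⟨_, rfl⟩
      | succ n => exact ⟨_, rfl⟩
    · obtain ⟨a, y⟩ := g
      by_cases ha : a = 0
      · subst ha
        refine ⟨0, cpPadic_mem_cl p _ (fun i => (y.appr i : ℤ)) (fun i => smul_zero _) ?_⟩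
        simp only [mul_one]
        exact_mod_cast cpPadic_tendsto_appr p y
      · by_cases hy : y = 0
        · subst hy
          refine ⟨Nat.pair 0 0 + 1, ?_⟩
          show (a, (0:ℤ_[p])) ∈ cpPadicFam p (Nat.pair 0 0 + 1)
          simp only [cpPadicFam, Nat.unpair_pair]
          refine cpPadic_mem_cl p _ (fun _ => (a.val : ℤ)) (fun i => ?_) ?_
          · rw [zsmul_eq_mul, mul_one]
            push_cast
            exact ZMod.natCast_zmod_val a
          · simp
        · -- main case : a ≠ 0, y ≠ 0
          set m : ℕ := y.valuation with hm
          set u : ℤ_[p]ˣ := PadicInt.unitCoeff hy with hu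
          have hyspec : y = (u : ℤ_[p]) * (p : ℤ_[p]) ^ m := PadicInt.unitCoeff_spec hy
          set ub : ZMod p := PadicInt.toZMod (u : ℤ_[p]) with hub
          have hubne : ub ≠ 0 := ((u.isUnit).map PadicInt.toZMod).ne_zero
          set r : ℕ := (ub * a⁻¹).val with hr
          have hrz : (r : ZMod p) = ub * a⁻¹ := ZMod.natCast_zmod_val _
          have hrne : (r : ZMod p) ≠ 0 := by
            rw [hrz]; exact mul_ne_zero hubne (inv_ne_zero ha)
          have hpd : ¬ (p : ℤ) ∣ (r : ℤ) := by
            intro hdvd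
            exact hrne (by exact_mod_cast (ZMod.intCast_zmod_eq_zero_iff_dvd (r:ℤ) p).mpr hdvd)
          have hrnorm : ‖((r:ℕ) : ℤ_[p])‖ = 1 := by
            refine le_antisymm (PadicInt.norm_le_one _) (not_lt.mp fun hlt => hpd ?_)
            have h' : ‖((r : ℤ) : ℤ_[p])‖ < 1 := by exact_mod_cast hlt
            exact (PadicInt.norm_int_lt_one_iff_dvd (r:ℤ)).mp h'
          have hrunit : IsUnit ((r : ℕ) : ℤ_[p]) := PadicInt.isUnit_iff.mpr hrnorm
          set z : ℤ_[p] := (u : ℤ_[p]) * ((hrunit.unit⁻¹ : ℤ_[p]ˣ) : ℤ_[p]) with hz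
          have hzr : z * ((r:ℕ) : ℤ_[p]) = (u : ℤ_[p]) := by
            rw [hz, mul_assoc]
            nth_rewrite 2 [← hrunit.unit_spec]
            rw [Units.inv_mul, mul_one]
          have htz : PadicInt.toZMod z = a := by
            have h1 : PadicInt.toZMod z * (r : ZMod p) = ub := by
              rw [← map_natCast (PadicInt.toZMod (p := p)) r, ← map_mul, hzr]
            have h2 : a * (r : ZMod p) = ub := by
              rw [hrz, ← mul_assoc, mul_comm a ub, mul_assoc,
                mul_inv_cancel₀ ha, mul_one]
            exact mul_right_cancel₀ hrne (h1.trans h2.symm)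
          have hdvd : (p : ℤ_[p]) ∣ z - (a.val : ℤ_[p]) := by
            have hker : PadicInt.toZMod (z - (a.val : ℤ_[p])) = 0 := by
              rw [map_sub, htz, map_natCast, ZMod.natCast_zmod_val, sub_self]
            have hmem : z - (a.val : ℤ_[p]) ∈ RingHom.ker (PadicInt.toZMod (p := p)) :=
              RingHom.mem_ker.mpr hker
            rw [PadicInt.ker_toZMod, PadicInt.maximalIdeal_eq_span_p,
              Ideal.mem_span_singleton] at hmem
            exact hmem
          obtain ⟨w, hw⟩ := hdvd
          refine ⟨Nat.pair m r + 1, ?_⟩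
          show (a, y) ∈ cpPadicFam p (Nat.pair m r + 1)
          simp only [cpPadicFam, Nat.unpair_pair]
          refine cpPadic_mem_cl p _ (fun i => (a.val : ℤ) + p * (w.appr i : ℤ))
            (fun i => ?_) ?_
          · rw [zsmul_eq_mul, mul_one]
            push_cast
            rw [ZMod.natCast_self, ZMod.natCast_zmod_val]
            ring
          · have hzval : (a.val : ℤ_[p]) + (p:ℤ_[p]) * w = z := by
              rw [← hw]; ring
            have ht : Tendsto (fun i => ((a.val:ℤ_[p]) + (p:ℤ_[p]) * ((w.appr i : ℕ) : ℤ_[p])))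
                atTop (𝓝 z) := by
              rw [← hzval]
              exact tendsto_const_nhds.add ((cpPadic_tendsto_appr p w).const_mul _)
            have ht2 := ht.mul_const ((p:ℤ_[p])^m * ((r:ℕ):ℤ_[p]))
            have hzy : z * ((p:ℤ_[p])^m * ((r:ℕ):ℤ_[p])) = y := by
              rw [hyspec, ← hzr]; ring
            rw [hzy] at ht2
            convert ht2 using 2 with i
            push_cast
            ring
  · -- Part 2: no covering by open procyclic subgroups
    rintro ⟨H, hprop, hcov⟩
    obtain ⟨n, hn⟩ := hcov ((1 : ZMod p), (0 : ℤ_[p]))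
    obtain ⟨hopen, x, hxeq⟩ := hprop n
    have hpne : (p : ℤ_[p]) ≠ 0 := by
      exact_mod_cast hp.ne_zero
    by_cases h2 : x.2 = 0
    · -- generator has trivial ℤ_p-component : H n is contained in the "snd = 0" slice
      have hsub : ∀ q : ZMod p × ℤ_[p], q ∈ H n → q.2 = 0 := by
        intro q hq
        rw [hxeq] at hq
        have hcl : IsClosed {q : ZMod p × ℤ_[p] | q.2 = 0} :=
          isClosed_eq continuous_snd continuous_const
        have hss : (AddSubgroup.zmultiples x : Set (ZMod p × ℤ_[p])) ⊆
            {q | q.2 = 0} := by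
          intro q hq'
          obtain ⟨k, rfl⟩ := (AddSubgroup.mem_zmultiples_iff).mp hq'
          show (k • x).2 = 0
          rw [Prod.smul_def]
          simp [h2]
        exact closure_minimal hss hcl hq
      -- but H n is open, so it contains (1, p^i) for large i
      have hV : IsOpen {z : ℤ_[p] | ((1 : ZMod p), z) ∈ H n} :=
        hopen.preimage (continuous_const.prodMk continuous_id)
      have h0 : (0:ℤ_[p]) ∈ {z : ℤ_[p] | ((1 : ZMod p), z) ∈ H n} := hn
      have hnhds := hV.mem_nhds h0
      have htp : Tendsto (fun i : ℕ => ((p : ℤ_[p])) ^ i) atTop (𝓝 0) :=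
        tendsto_pow_atTop_nhds_zero_of_norm_lt_one (by
          rw [PadicInt.norm_p]
          rw [inv_lt_one_iff₀]
          right
          exact_mod_cast hp.one_lt)
      obtain ⟨i, hi⟩ := (htp.eventually_mem hnhds).exists
      have : ((p : ℤ_[p])) ^ i = 0 := hsub _ hi
      exact pow_ne_zero i hpne this
    · -- generator has nonzero ℤ_p-component : (1,0) can't be in the closure
      have hn' : ((1 : ZMod p), (0 : ℤ_[p])) ∈
          _root_.closure (AddSubgroup.zmultiples x : Set (ZMod p × ℤ_[p])) := by
        rw [hxeq] at hn; exact hn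
      have hxpos : 0 < ‖x.2‖ := norm_pos_iff.mpr h2
      have hU : IsOpen ((Prod.fst ⁻¹' {(1 : ZMod p)}) ∩
          (Prod.snd ⁻¹' Metric.ball (0:ℤ_[p]) ‖x.2‖)) :=
        ((isOpen_discrete _).preimage continuous_fst).inter
          (Metric.isOpen_ball.preimage continuous_snd)
      have hmemU : ((1 : ZMod p), (0 : ℤ_[p])) ∈ (Prod.fst ⁻¹' {(1 : ZMod p)}) ∩
          (Prod.snd ⁻¹' Metric.ball (0:ℤ_[p]) ‖x.2‖) := by
        refine ⟨rfl, ?_⟩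
        simpa [Metric.mem_ball] using hxpos
      obtain ⟨q, ⟨hq1, hq2⟩, hqS⟩ := (_root_.mem_closure_iff.mp hn') _ hU hmemU
      obtain ⟨k, rfl⟩ := (AddSubgroup.mem_zmultiples_iff).mp hqS
      rw [Set.mem_preimage, Set.mem_singleton_iff] at hq1
      rw [Set.mem_preimage, Metric.mem_ball, dist_zero_right] at hq2
      have hk1 : (k : ZMod p) * x.1 = 1 := by
        have : (k • x).1 = 1 := hq1
        rwa [Prod.smul_def, zsmul_eq_mul] at this
      have hkne : (k : ZMod p) ≠ 0 := by
        intro h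
        rw [h, zero_mul] at hk1
        exact zero_ne_one hk1
      have hkd : ¬ (p : ℤ) ∣ k := fun hd => hkne ((ZMod.intCast_zmod_eq_zero_iff_dvd k p).mpr hd)
      have hknorm : ‖((k : ℤ) : ℤ_[p])‖ = 1 :=
        le_antisymm (PadicInt.norm_le_one _)
          (not_lt.mp fun hlt => hkd ((PadicInt.norm_int_lt_one_iff_dvd k).mp hlt))
      have : ‖(k • x).2‖ = ‖x.2‖ := by
        rw [Prod.smul_def]
        show ‖k • x.2‖ = ‖x.2‖
        rw [zsmul_eq_mul, norm_mul, hknorm, one_mul]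
      rw [this] at hq2
      exact lt_irrefl _ hq2
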